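/- If B ⊆ ℕ contains two elements p < q, then S(x,y) = xy + y - yq + 1 makes ⟨B,S⟩ an ℕ-Induction Model. -/

import Mathlib

/-- Cumulative closure `Cl_i(⟨B,S⟩)` for a binary generating function. -/
def clos2 (S : ℕ+ → ℕ+ → ℤ) (B : Set ℕ+) : ℕ → Set ℕ+
  | 0 => B
  | i + 1 => clos2 S B i ∪
      {n : ℕ+ | ∃ x ∈ clos2 S B i, ∃ y ∈ clos2 S B i, S x y = (n : ℤ)}

/-- `Sⁱ(B)` for a binary generating function. -/
def spow2 (S : ℕ+ → ℕ+ → ℤ) (B : Set ℕ+) : ℕ → Set ℕ+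
  | 0 => B
  | i + 1 => {n : ℕ+ | ∃ x ∈ clos2 S B i, ∃ y ∈ clos2 S B i, S x y = (n : ℤ)}

lemma clos2_mono (S : ℕ+ → ℕ+ → ℤ) (B : Set ℕ+) {i j : ℕ} (h : i ≤ j) :
    clos2 S B i ⊆ clos2 S B j := by
  induction j with
  | zero => simp_all
  | succ j ih =>
    rcases Nat.lt_or_ge i (j+1) with h' | h'
    · exact (ih (Nat.lt_succ_iff.mp h')).trans (Set.subset_union_left)
    · have : i = j + 1 := le_antisymm h h'
      subst this; rfl

lemma clos2_subset_iUnion_spow2 (S : ℕ+ → ℕ+ → ℤ) (B : Set ℕ+) (i : ℕ) :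
    clos2 S B i ⊆ ⋃ j, spow2 S B j := by
  induction i with
  | zero => exact Set.subset_iUnion_of_subset 0 (by rfl)
  | succ i ih =>
    intro n hn
    rcases hn with hn | hn
    · exact ih hn
    · exact Set.mem_iUnion.2 ⟨i+1, hn⟩

/-- If `B` contains two elements `p < q`, then `S(x,y) = xy + y - yq + 1` makes `⟨B,S⟩` an
ℕ-Induction Model. -/
theorem multiplicative_two_elements_induction_model (B : Set ℕ+) (p q : ℕ+) (hpq : p < q)
    (hp : p ∈ B) (hq : q ∈ B) :
    (⋃ i, spow2 (fun x y => (x : ℤ) * y + y - y * q + 1) B i) = Set.univ := by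
  set S : ℕ+ → ℕ+ → ℤ := fun x y => (x : ℤ) * y + y - y * q + 1 with hS
  -- step lemma
  have step : ∀ a : ℕ+, (∃ i, a ∈ clos2 S B i) → ∃ i, a + 1 ∈ clos2 S B i := by
    rintro a ⟨i, ha⟩
    refine ⟨i + 1, Or.inr ⟨q, clos2_mono S B (Nat.zero_le i) hq, a, ha, ?_⟩⟩
    push_cast [hS]
    ring
  -- every element ≥ p is reachable
  have reach : ∀ n : ℕ+, p ≤ n → ∃ i, n ∈ clos2 S B i := by
    intro n
    induction n using PNat.recOn with
    | one =>
      intro h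
      have : p = 1 := le_antisymm h p.one_le
      exact ⟨0, this ▸ hp⟩
    | succ n ih =>
      intro h
      rcases lt_or_eq_of_le h with h' | h'
      · have : p ≤ n := PNat.lt_add_one_iff.mp h'
        exact step n (ih this)
      · exact ⟨0, h' ▸ hp⟩
  -- (q-1 : ℕ+) casts
  have h1q : (1 : ℕ+) < q := lt_of_le_of_lt p.one_le hpq
  have hq1c : ((q - 1 : ℕ+) : ℕ) = (q : ℕ) - 1 := by
    simp [PNat.sub_coe, h1q]
  -- q - 1 is reachable
  have hq1 : ∃ i, (q - 1 : ℕ+) ∈ clos2 S B i := by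
    apply reach
    have hpn : (p : ℕ) ≤ (q : ℕ) - 1 := Nat.le_sub_one_of_lt hpq
    exact (PNat.coe_le_coe _ _).mp (by omega)
  -- 1 is reachable via S(q-1, q-1) = 1
  have h1 : ∃ i, (1 : ℕ+) ∈ clos2 S B i := by
    obtain ⟨i, hi⟩ := hq1
    refine ⟨i + 1, Or.inr ⟨q - 1, hi, q - 1, hi, ?_⟩⟩
    have hc : ((q - 1 : ℕ+) : ℤ) = (q : ℤ) - 1 := by
      have h0 := q.property
      rw [show ((q - 1 : ℕ+) : ℤ) = (((q - 1 : ℕ+) : ℕ) : ℤ) from rfl, hq1c]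
      have h1 : (1:ℕ) ≤ (q:ℕ) := h0
      omega
    simp only [hS, hc]
    push_cast
    ring
  -- every n is reachable
  have all : ∀ n : ℕ+, ∃ i, n ∈ clos2 S B i := by
    intro n
    induction n using PNat.recOn with
    | one => exact h1
    | succ n ih => exact step n ih
  ext n
  simp only [Set.mem_univ, iff_true]
  obtain ⟨i, hi⟩ := all n
  exact clos2_subset_iUnion_spow2 S B i hi
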